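/- Domination is preserved under substitution: if θ₂ is dominated by θ₁ (i.e., |θ₁| ≤ |θ₂| as weights and sat(θ₂) ⊆ sat(θ₁)), then for any positive Boolean formula θ, the formula θ[θ₂ ← θ₁] obtained by replacing every occurrence of θ₂ with θ₁ dominates θ. -/

import Mathlib

/-- Positive Boolean formulas over an index type `ι` of atoms. -/
inductive PBF (ι : Type) : Type where
  | empty : PBF ι
  | atom : ι → PBF ι
  | union : PBF ι → PBF ι → PBF ι
  | inter : PBF ι → PBF ι → PBF ι
deriving DecidableEq

/-- Interpretation of a positive Boolean formula, given the sets denoted by atoms. -/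
def PBF.eval {ι α : Type} (val : ι → Set α) : PBF ι → Set α
  | .empty => ∅
  | .atom i => val i
  | .union a b => a.eval val ∪ b.eval val
  | .inter a b => a.eval val ∩ b.eval val

/-- Weight of a positive Boolean formula, given weights of the atoms. -/
def PBF.wt {ι : Type} (w : ι → ℕ) : PBF ι → ℕ
  | .empty => 0
  | .atom i => w i
  | .union a b => 1 + a.wt w + b.wt w
  | .inter a b => 1 + a.wt w + b.wt w

/-- The set of elements of `P ∪ N` correctly classified by a set `S`. -/
def satSet {α : Type} (P N S : Set α) : Set α := (S ∩ P) ∪ (N \ S)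

/-- Substitution `θ[θ₂ ← θ₁]`: replace every occurrence of `θ₂` in `θ` by `θ₁`. -/
def PBF.subst {ι : Type} [DecidableEq ι] (θ θ₂ θ₁ : PBF ι) : PBF ι :=
  if θ = θ₂ then θ₁ else
    match θ with
    | .union a b => .union (a.subst θ₂ θ₁) (b.subst θ₂ θ₁)
    | .inter a b => .inter (a.subst θ₂ θ₁) (b.subst θ₂ θ₁)
    | x => x

/-- `Dominates val w P N θ₁ θ₂` means `θ₂ ⪯ θ₁`:
`wt θ₁ ≤ wt θ₂` and `sat θ₂ ⊆ sat θ₁`. -/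
def Dominates {ι α : Type} (val : ι → Set α) (w : ι → ℕ) (P N : Set α)
    (θ₁ θ₂ : PBF ι) : Prop :=
  θ₁.wt w ≤ θ₂.wt w ∧ satSet P N (θ₂.eval val) ⊆ satSet P N (θ₁.eval val)

lemma satSet_subset_iff {α : Type} {P N : Set α} (hd : Disjoint P N) (S S' : Set α) :
    satSet P N S ⊆ satSet P N S' ↔
      (∀ x ∈ P, x ∈ S → x ∈ S') ∧ (∀ x ∈ N, x ∉ S → x ∉ S') := by
  unfold satSet
  constructor
  · intro h
    constructor
    · intro x hxP hxS
      rcases h (Or.inl ⟨hxS, hxP⟩) with ⟨hS', _⟩ | ⟨hN, _⟩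
      · exact hS'
      · exact absurd hxP (Set.disjoint_right.mp hd hN)
    · intro x hxN hxS
      intro hxS'
      rcases h (Or.inr ⟨hxN, hxS⟩) with ⟨_, hP⟩ | ⟨_, h2⟩
      · exact Set.disjoint_left.mp hd hP hxN
      · exact h2 hxS'
  · rintro ⟨h1, h2⟩ x (⟨hS, hP⟩ | ⟨hN, hS⟩)
    · exact Or.inl ⟨h1 x hP hS, hP⟩
    · exact Or.inr ⟨hN, h2 x hN hS⟩

/-- if `θ₂ ⪯ θ₁`, then `θ ⪯ θ[θ₂ ← θ₁]` for every formula `θ`. -/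
theorem stmt_6 {ι α : Type} [DecidableEq ι] (P N : Set α) (hP : P.Finite)
    (hN : N.Finite) (hd : Disjoint P N) (val : ι → Set α) (w : ι → ℕ)
    (hw : ∀ i, 1 ≤ w i) (θ₁ θ₂ : PBF ι)
    (hdom : Dominates val w P N θ₁ θ₂) (θ : PBF ι) :
    Dominates val w P N (θ.subst θ₂ θ₁) θ := by
  induction θ with
  | empty =>
    rw [PBF.subst]
    split
    · next h => subst h; exact hdom
    all_goals first
      | exact ⟨le_rfl, subset_rfl⟩
      | (intro a b h; exact nomatch h)
  | atom i =>
    rw [PBF.subst]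
    split
    · next h => subst h; exact hdom
    all_goals first
      | exact ⟨le_rfl, subset_rfl⟩
      | (intro a b h; exact nomatch h)
  | union a b iha ihb =>
    rw [PBF.subst]
    split
    · next h => subst h; exact hdom
    · obtain ⟨wa, sa⟩ := iha
      obtain ⟨wb, sb⟩ := ihb
      refine ⟨by simp only [PBF.wt]; omega, ?_⟩
      rw [satSet_subset_iff hd] at sa sb ⊢
      obtain ⟨sa1, sa2⟩ := sa
      obtain ⟨sb1, sb2⟩ := sb
      constructor
      · rintro x hxP (h | h)
        · exact Or.inl (sa1 x hxP h)
        · exact Or.inr (sb1 x hxP h)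
      · rintro x hxN h hc
        rcases hc with h1 | h1
        · exact sa2 x hxN (fun h2 => h (Or.inl h2)) h1
        · exact sb2 x hxN (fun h2 => h (Or.inr h2)) h1
  | inter a b iha ihb =>
    rw [PBF.subst]
    split
    · next h => subst h; exact hdom
    · obtain ⟨wa, sa⟩ := iha
      obtain ⟨wb, sb⟩ := ihb
      refine ⟨by simp only [PBF.wt]; omega, ?_⟩
      rw [satSet_subset_iff hd] at sa sb ⊢
      obtain ⟨sa1, sa2⟩ := sa
      obtain ⟨sb1, sb2⟩ := sb
      constructor
      · rintro x hxP ⟨h1, h2⟩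
        exact ⟨sa1 x hxP h1, sb1 x hxP h2⟩
      · rintro x hxN h ⟨h1, h2⟩
        by_cases ha : x ∈ a.eval val
        · by_cases hb : x ∈ b.eval val
          · exact h ⟨ha, hb⟩
          · exact sb2 x hxN hb h2
        · exact sa2 x hxN ha h1
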